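/- The integral ∫_0^{π/2} t^2 / sin t dt equals 2πG − (7/2)ζ(3), where G is the Catalan constant. -/

import Mathlib

open Real MeasureTheory Filter Topology

noncomputable def catalanG : ℝ := ∑' k : ℕ, (-1 : ℝ) ^ k / (2 * (k : ℝ) + 1) ^ 2

noncomputable def zeta3 : ℝ := ∑' k : ℕ, 1 / ((k : ℝ) + 1) ^ 3

lemma antider (a : ℝ) (ha : a ≠ 0) (b : ℝ) :
    ∫ t in (0:ℝ)..b, t^2 * Real.sin (a*t)
    = (-(1/a)) * (b^2 * Real.cos (a*b)) + (2/a^2) * (b * Real.sin (a*b))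
      + (2/a^3) * Real.cos (a*b) - 2/a^3 := by
  have key : ∀ t : ℝ, HasDerivAt (fun t => (-(1/a)) * (t^2 * Real.cos (a*t))
      + (2/a^2) * (t * Real.sin (a*t)) + (2/a^3) * Real.cos (a*t)) (t^2 * Real.sin (a*t)) t := by
    intro t
    have hat : HasDerivAt (fun t : ℝ => a * t) a t := by simpa using (hasDerivAt_id t).const_mul a
    have hc : HasDerivAt (fun t => Real.cos (a*t)) (-Real.sin (a*t) * a) t :=
      (Real.hasDerivAt_cos (a*t)).comp t hat
    have hs : HasDerivAt (fun t => Real.sin (a*t)) (Real.cos (a*t) * a) t :=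
      (Real.hasDerivAt_sin (a*t)).comp t hat
    have h1 : HasDerivAt (fun t : ℝ => t^2 * Real.cos (a*t))
        (2*t * Real.cos (a*t) + t^2 * (-Real.sin (a*t) * a)) t := by
      simpa using ((hasDerivAt_pow 2 t).fun_mul hc)
    have h2 : HasDerivAt (fun t : ℝ => t * Real.sin (a*t))
        (Real.sin (a*t) + t * (Real.cos (a*t) * a)) t := by
      simpa using ((hasDerivAt_id t).fun_mul hs)
    have := ((h1.const_mul (-(1/a))).add (h2.const_mul (2/a^2))).add (hc.const_mul (2/a^3))
    refine this.congr_deriv ?_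
    field_simp
    ring
  rw [intervalIntegral.integral_eq_sub_of_hasDerivAt (fun t _ => key t)]
  · simp
  · apply Continuous.intervalIntegrable
    continuity

noncomputable def gfun (x t : ℝ) : ℝ :=
  2*x*(1+x^2)*Real.sin t / (1 - 2*x^2*Real.cos (2*t) + x^4)

lemma denom_eq (x t : ℝ) :
    1 - 2*x^2*Real.cos (2*t) + x^4 = (1-x^2)^2 + 4*x^2*(Real.sin t)^2 := by
  have h := Real.cos_two_mul t
  have h2 := Real.sin_sq_add_cos_sq t
  nlinarith [h, h2]

lemma denom_pos {x : ℝ} (t : ℝ) (hx : x^2 < 1) :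
    0 < 1 - 2*x^2*Real.cos (2*t) + x^4 := by
  rw [denom_eq]
  have h1 : 0 < (1-x^2)^2 := by
    have : (0:ℝ) < 1 - x^2 := by linarith
    positivity
  nlinarith [sq_nonneg (Real.sin t), sq_nonneg x]

lemma hasSum_gfun {x : ℝ} (t : ℝ) (hx : |x| < 1) :
    HasSum (fun k : ℕ => 2 * x ^ (2*k+1) * Real.sin ((2*(k:ℝ)+1) * t)) (gfun x t) := by
  set z : ℂ := (x:ℂ) * Complex.exp (t * Complex.I) with hzdef
  have hznorm : ‖z‖ < 1 := by
    rw [hzdef]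
    simpa [Complex.norm_exp_ofReal_mul_I, Complex.norm_real]
      using hx
  have hz2 : ‖z^2‖ < 1 := by
    rw [norm_pow]
    calc ‖z‖^2 ≤ ‖z‖ := by nlinarith [norm_nonneg z]
    _ < 1 := hznorm
  have hgeo : HasSum (fun k : ℕ => (z^2)^k * z) ((1 - z^2)⁻¹ * z) :=
    (hasSum_geometric_of_norm_lt_one hz2).mul_right z
  have him := Complex.imCLM.hasSum hgeo
  have hpow : ∀ n : ℕ, z ^ n = ((x^n : ℝ):ℂ) * Complex.exp (((n*t:ℝ):ℂ) * Complex.I) := by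
    intro n
    rw [hzdef, mul_pow, ← Complex.ofReal_pow, ← Complex.exp_nat_mul]
    have h3 : (n:ℂ) * ((t:ℂ) * Complex.I) = ((n*t:ℝ):ℂ) * Complex.I := by push_cast; ring
    rw [h3]
  have him2 := him.mul_left 2
  have heq : (fun k : ℕ => 2 * Complex.imCLM ((z^2)^k * z))
      = fun k : ℕ => 2 * x ^ (2*k+1) * Real.sin ((2*(k:ℝ)+1) * t) := by
    funext k
    have h1 : (z^2)^k * z = z ^ (2*k+1) := by ring
    rw [h1, Complex.imCLM_apply, hpow, Complex.mul_im, Complex.ofReal_re, Complex.ofReal_im,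
      Complex.exp_ofReal_mul_I_im]
    push_cast
    ring
  have hx2 : x^2 < 1 := by nlinarith [abs_lt.1 hx |>.1, abs_lt.1 hx |>.2]
  have hD : (0:ℝ) < 1 - 2*x^2*Real.cos (2*t) + x^4 := denom_pos t hx2
  have hz2re : (z^2).re = x^2 * Real.cos (2*t) := by
    rw [hpow 2, Complex.mul_re, Complex.ofReal_re, Complex.ofReal_im,
      Complex.exp_ofReal_mul_I_re, Complex.exp_ofReal_mul_I_im]
    push_cast
    ring
  have hz2im : (z^2).im = x^2 * Real.sin (2*t) := by
    rw [hpow 2, Complex.mul_im, Complex.ofReal_re, Complex.ofReal_im,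
      Complex.exp_ofReal_mul_I_im]
    push_cast
    ring
  have hzre : z.re = x * Real.cos t := by
    simpa [Complex.mul_re, Complex.exp_ofReal_mul_I_im, Complex.exp_ofReal_mul_I_re] using
      congrArg Complex.re (hpow 1)
  have hzim : z.im = x * Real.sin t := by
    simpa [Complex.mul_im, Complex.exp_ofReal_mul_I_im, Complex.exp_ofReal_mul_I_re] using
      congrArg Complex.im (hpow 1)
  have hwne : (1:ℂ) - z^2 ≠ 0 := by
    intro h
    have : z^2 = 1 := by linear_combination -h
    rw [this] at hz2
    simp at hz2
  have hval : 2 * Complex.imCLM ((1 - z^2)⁻¹ * z) = gfun x t := by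
    rw [Complex.imCLM_apply, inv_mul_eq_div, Complex.div_im, Complex.normSq_apply]
    simp only [Complex.sub_re, Complex.sub_im, Complex.one_re, Complex.one_im,
      hz2re, hz2im, hzre, hzim]
    have hDen : (1 - x^2*Real.cos (2*t)) * (1 - x^2*Real.cos (2*t))
        + (0 - x^2*Real.sin (2*t)) * (0 - x^2*Real.sin (2*t))
        = 1 - 2*x^2*Real.cos (2*t) + x^4 := by
      have h2 := Real.sin_sq_add_cos_sq (2*t)
      linear_combination x^4 * h2
    rw [gfun, hDen, div_sub_div_same, ← mul_div_assoc]
    congr 1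
    have s2 := Real.sin_two_mul t
    have c2 := Real.cos_two_mul t
    linear_combination (2*x^3*Real.cos t) * s2 - (2*x^3*Real.sin t) * c2
  rw [heq, hval] at him2
  exact him2

lemma integ_k (k : ℕ) :
    ∫ t in (0:ℝ)..(π/2), t^2 * Real.sin ((2*k+1)*t)
    = π*(-1)^k/(2*(k:ℝ)+1)^2 - 2/(2*(k:ℝ)+1)^3 := by
  have ha : ((2*(k:ℕ)+1 : ℕ) : ℝ) ≠ 0 := by positivity
  have hcos : Real.cos ((2*(k:ℝ)+1) * (π/2)) = 0 := by
    have h : ((2*(k:ℝ)+1)) * (π/2) = k*π + π/2 := by ring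
    rw [h, Real.cos_add, Real.cos_pi_div_two, Real.sin_pi_div_two, Real.sin_nat_mul_pi]
    ring
  have hsin : Real.sin ((2*(k:ℝ)+1) * (π/2)) = (-1)^k := by
    have h : ((2*(k:ℝ)+1)) * (π/2) = k*π + π/2 := by ring
    rw [h, Real.sin_add, Real.cos_pi_div_two, Real.sin_pi_div_two, Real.sin_nat_mul_pi]
    have h2 : Real.cos (k*π) = (-1)^k := by simpa using Real.cos_nat_mul_pi_sub 0 k
    simp [h2]
  have ha' : (2*(k:ℝ)+1) ≠ 0 := by positivity
  rw [antider (2*(k:ℝ)+1) ha' (π/2), hcos, hsin]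
  field_simp
  ring

lemma gfun_bound {x t : ℝ} (hx1 : 1/2 ≤ x) (hx2 : x ≤ 1) (ht : 0 < t) (ht2 : t ≤ π/2) :
    |t^2 * gfun x t| ≤ π^2 := by
  have hpi := Real.pi_pos
  have htpi : t < π := by linarith
  have hs : 0 < Real.sin t := Real.sin_pos_of_pos_of_lt_pi ht htpi
  have hsge : 2/π * t ≤ Real.sin t := Real.mul_le_sin (le_of_lt ht) ht2
  set D := 1 - 2*x^2*Real.cos (2*t) + x^4 with hDdef
  set N := 2*x*(1+x^2)*Real.sin t with hNdef
  have hDge : Real.sin t ^ 2 ≤ D := by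
    rw [hDdef, denom_eq]
    have h4 : (0:ℝ) ≤ 4*x^2 - 1 :=
      by nlinarith [mul_nonneg (show (0:ℝ) ≤ 2*x-1 by linarith) (show (0:ℝ) ≤ 2*x+1 by linarith)]
    nlinarith [sq_nonneg (1-x^2), mul_nonneg h4 (sq_nonneg (Real.sin t))]
  have hDpos : 0 < D := lt_of_lt_of_le (by positivity) hDge
  have hx0 : (0:ℝ) ≤ x := by linarith
  have hN0 : 0 ≤ N := by
    rw [hNdef]
    apply mul_nonneg (by positivity) hs.le
  have hN4 : N ≤ 4 * Real.sin t := by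
    rw [hNdef]
    have h3 : x^3 ≤ 1 := by nlinarith
    nlinarith [mul_le_mul_of_nonneg_right
      (show 2*x*(1+x^2) ≤ 4 by nlinarith) hs.le]
  have habs : t^2 * gfun x t = |t^2 * gfun x t| := by
    rw [abs_of_nonneg]
    rw [gfun, ← hDdef, ← hNdef]
    positivity
  rw [← habs, gfun, ← hDdef, ← hNdef, mul_div_assoc', div_le_iff₀ hDpos]
  have hpe : π^2 * (2/π*t) = 2*π*t := by field_simp
  have key1 : 4 * t^2 ≤ π^2 * Real.sin t := by
    have h1 : 2*π*t ≤ π^2 * Real.sin t := by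
      have := mul_le_mul_of_nonneg_left hsge (sq_nonneg π)
      rw [hpe] at this; linarith
    nlinarith [mul_nonneg (show (0:ℝ) ≤ π - 2*t by linarith) (le_of_lt ht)]
  have key2 : t^2 * N ≤ 4 * t^2 * Real.sin t := by
    nlinarith [mul_le_mul_of_nonneg_left hN4 (sq_nonneg t)]
  nlinarith [mul_le_mul_of_nonneg_right key1 (le_of_lt hs),
    mul_le_mul_of_nonneg_left hDge (sq_nonneg π)]

lemma tendsto_gfun {t : ℝ} (ht : 0 < t) (ht2 : t ≤ π/2) :
    Tendsto (fun x => t^2 * gfun x t) (𝓝[<] (1:ℝ)) (𝓝 (t^2 / Real.sin t)) := by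
  have hpi := Real.pi_pos
  have hs : 0 < Real.sin t := Real.sin_pos_of_pos_of_lt_pi ht (by linarith)
  have hden1 : 1 - 2*(1:ℝ)^2*Real.cos (2*t) + (1:ℝ)^4 = 4 * Real.sin t ^ 2 := by
    rw [denom_eq]; ring
  have hne : 1 - 2*(1:ℝ)^2*Real.cos (2*t) + (1:ℝ)^4 ≠ 0 := by
    rw [hden1]; positivity
  have hcont : ContinuousAt (fun x => t^2 * gfun x t) 1 := by
    apply ContinuousAt.mul continuousAt_const
    apply ContinuousAt.div
    · fun_prop
    · fun_prop
    · exact hne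
  have hval : t^2 * gfun 1 t = t^2 / Real.sin t := by
    rw [gfun, hden1]
    field_simp
    ring
  rw [← hval]
  exact hcont.tendsto.mono_left nhdsWithin_le_nhds

lemma interchange {x : ℝ} (hx0 : 0 < x) (hx1 : x < 1) :
    ∫ t in Set.Ioc (0:ℝ) (π/2), t^2 * gfun x t
    = ∑' k : ℕ, (2*x^(2*k+1)) * (π*(-1)^k/(2*(k:ℝ)+1)^2 - 2/(2*(k:ℝ)+1)^3) := by
  have hpi := Real.pi_pos
  have hx' : |x| < 1 := abs_lt.2 ⟨by linarith, hx1⟩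
  set F : ℕ → ℝ → ℝ := fun k t => (2*x^(2*k+1)) * (t^2 * Real.sin ((2*(k:ℝ)+1)*t)) with hF
  have hcont : ∀ k, Continuous (F k) := by intro k; fun_prop
  have hptwise : ∀ t : ℝ, HasSum (fun k => F k t) (t^2 * gfun x t) := by
    intro t
    have h := (hasSum_gfun t hx').mul_left (t^2)
    have hfg : (fun k : ℕ => t^2 * (2 * x ^ (2*k+1) * Real.sin ((2*(k:ℝ)+1) * t)))
        = fun k => F k t := by funext k; rw [hF]; ring
    rwa [hfg] at h
  have hInt : ∀ k, IntegrableOn (F k) (Set.Ioc (0:ℝ) (π/2)) := fun k =>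
    (hcont k).integrableOn_Ioc
  have hxk : ∀ k : ℕ, (0:ℝ) ≤ x^(2*k+1) := fun k => by positivity
  have hnormbound : ∀ k, ∫ t in Set.Ioc (0:ℝ) (π/2), ‖F k t‖
      ≤ (π/2) * (2*x^(2*k+1) * (π/2)^2) := by
    intro k
    have hle : ∀ t ∈ Set.Ioc (0:ℝ) (π/2), ‖F k t‖ ≤ 2*x^(2*k+1) * (π/2)^2 := by
      intro t ht
      rw [Real.norm_eq_abs, hF]
      simp only []
      rw [abs_mul, abs_of_nonneg (by positivity : (0:ℝ) ≤ 2*x^(2*k+1)), abs_mul,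
        abs_of_nonneg (sq_nonneg t)]
      have h2 : t^2 ≤ (π/2)^2 := by nlinarith [ht.1, ht.2]
      have h3 : |Real.sin ((2*(k:ℝ)+1)*t)| ≤ 1 := Real.abs_sin_le_one _
      calc 2*x^(2*k+1) * (t^2 * |Real.sin ((2*(k:ℝ)+1)*t)|)
          ≤ 2*x^(2*k+1) * ((π/2)^2 * 1) := by
            apply mul_le_mul_of_nonneg_left _ (by positivity)
            apply mul_le_mul h2 h3 (abs_nonneg _) (sq_nonneg _)
        _ = 2*x^(2*k+1) * (π/2)^2 := by ring
    calc ∫ t in Set.Ioc (0:ℝ) (π/2), ‖F k t‖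
        ≤ ∫ _t in Set.Ioc (0:ℝ) (π/2), 2*x^(2*k+1) * (π/2)^2 :=
          setIntegral_mono_on (hInt k).norm (integrableOn_const measure_Ioc_lt_top.ne)
            measurableSet_Ioc hle
      _ = (π/2) * (2*x^(2*k+1) * (π/2)^2) := by
          rw [setIntegral_const, Real.volume_real_Ioc, smul_eq_mul]
          rw [max_eq_left (by linarith)]
          ring_nf
  have hsum : Summable (fun k => ∫ t in Set.Ioc (0:ℝ) (π/2), ‖F k t‖) := by
    apply Summable.of_nonneg_of_le (fun k => integral_nonneg (fun t => norm_nonneg _)) hnormbound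
    have hgeom : Summable (fun k : ℕ => ((π/2) * (2*x*(π/2)^2)) * (x^2)^k) :=
      (summable_geometric_of_lt_one (by positivity) (by nlinarith)).mul_left _
    apply hgeom.congr
    intro k
    rw [pow_add, pow_mul, pow_one]
    ring
  have hswap := integral_tsum_of_summable_integral_norm hInt hsum
  have hlhs : ∫ t in Set.Ioc (0:ℝ) (π/2), t^2 * gfun x t
      = ∫ t in Set.Ioc (0:ℝ) (π/2), ∑' k, F k t := by
    apply setIntegral_congr_fun measurableSet_Ioc
    intro t _
    exact ((hptwise t).tsum_eq).symm
  rw [hlhs, ← hswap]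
  apply tsum_congr
  intro k
  rw [← intervalIntegral.integral_of_le (by linarith : (0:ℝ) ≤ π/2), hF]
  simp only []
  rw [intervalIntegral.integral_const_mul, integ_k k]

lemma sq_summable : Summable (fun k : ℕ => (1:ℝ)/(2*(k:ℝ)+1)^2) := by
  have base : Summable (fun n : ℕ => 1 / (n : ℝ) ^ 2) := summable_one_div_nat_pow.2 one_lt_two
  have h1 : Summable (fun k : ℕ => (1:ℝ)/((k:ℝ)+1)^2) := by
    have := (summable_nat_add_iff 1).2 base
    apply this.congr
    intro k
    push_cast
    ring
  apply Summable.of_nonneg_of_le (fun k => by positivity) _ h1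
  intro k
  have hk : (0:ℝ) ≤ (k:ℝ) := k.cast_nonneg
  rw [div_le_div_iff₀ (by positivity) (by positivity)]
  nlinarith

lemma cube_summable : Summable (fun k : ℕ => (1:ℝ)/(2*(k:ℝ)+1)^3) := by
  apply Summable.of_nonneg_of_le (fun k => by positivity) _ sq_summable
  intro k
  have hk : (0:ℝ) ≤ (k:ℝ) := k.cast_nonneg
  rw [div_le_div_iff₀ (by positivity) (by positivity)]
  nlinarith

lemma cube_shift_summable : Summable (fun k : ℕ => (1:ℝ)/((k:ℝ)+1)^3) := by
  have base : Summable (fun n : ℕ => 1 / (n : ℝ) ^ 3) := summable_one_div_nat_pow.2 (by norm_num)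
  have := (summable_nat_add_iff 1).2 base
  apply this.congr
  intro k
  push_cast
  ring

lemma odd_cubes : ∑' k : ℕ, (1:ℝ)/(2*(k:ℝ)+1)^3 = 7/8 * zeta3 := by
  set f : ℕ → ℝ := fun n => 1/((n:ℝ)+1)^3 with hf
  have he : Summable (fun k : ℕ => f (2*k)) := by
    apply cube_summable.congr
    intro k
    rw [hf]
    push_cast
    ring
  have ho : Summable (fun k : ℕ => f (2*k+1)) := by
    apply (cube_shift_summable.mul_left (1/8)).congr
    intro k
    rw [hf]
    push_cast
    field_simp
    ring
  have hsplit := tsum_even_add_odd he ho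
  have hzeta : ∑' k, f k = zeta3 := rfl
  have he_val : ∑' k : ℕ, f (2*k) = ∑' k : ℕ, (1:ℝ)/(2*(k:ℝ)+1)^3 := by
    apply tsum_congr
    intro k
    rw [hf]
    push_cast
    ring_nf
  have ho_val : ∑' k : ℕ, f (2*k+1) = 1/8 * zeta3 := by
    have h1 : (fun k : ℕ => f (2*k+1)) = fun k : ℕ => (1/8) * ((1:ℝ)/((k:ℝ)+1)^3) := by
      funext k
      rw [hf]
      push_cast
      field_simp
      ring
    rw [h1, tsum_mul_left]
    rfl
  rw [he_val, ho_val, hzeta] at hsplit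
  linarith

lemma alt_summable : Summable (fun k : ℕ => (-1:ℝ)^k/(2*(k:ℝ)+1)^2) := by
  apply Summable.of_abs
  have h : (fun k : ℕ => |(-1:ℝ)^k/(2*(k:ℝ)+1)^2|) = fun k : ℕ => (1:ℝ)/(2*(k:ℝ)+1)^2 := by
    funext k
    rw [abs_div, abs_pow, abs_neg, abs_one, one_pow, abs_of_nonneg (by positivity)]
  rw [h]
  exact sq_summable

lemma final_sum : ∑' k : ℕ, 2 * (π*(-1)^k/(2*(k:ℝ)+1)^2 - 2/(2*(k:ℝ)+1)^3)
    = 2*π*catalanG - 7/2*zeta3 := by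
  have h2 : (fun k : ℕ => 2 * (π*(-1)^k/(2*(k:ℝ)+1)^2 - 2/(2*(k:ℝ)+1)^3))
      = fun k : ℕ => (2*π) * ((-1:ℝ)^k/(2*(k:ℝ)+1)^2) - 4 * ((1:ℝ)/(2*(k:ℝ)+1)^3) := by
    funext k
    ring
  rw [h2, Summable.tsum_sub ((alt_summable).mul_left (2*π)) (cube_summable.mul_left 4),
    tsum_mul_left, tsum_mul_left, odd_cubes]
  rw [catalanG]
  ring

lemma tannery_lim : Tendsto (fun x : ℝ =>
      ∑' k : ℕ, (2*x^(2*k+1)) * (π*(-1)^k/(2*(k:ℝ)+1)^2 - 2/(2*(k:ℝ)+1)^3))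
    (𝓝[<] (1:ℝ))
    (𝓝 (∑' k : ℕ, 2 * (π*(-1)^k/(2*(k:ℝ)+1)^2 - 2/(2*(k:ℝ)+1)^3))) := by
  have hpi := Real.pi_pos
  set c : ℕ → ℝ := fun k => π*(-1)^k/(2*(k:ℝ)+1)^2 - 2/(2*(k:ℝ)+1)^3 with hc
  have hcb : ∀ k, |c k| ≤ π/(2*(k:ℝ)+1)^2 + 2/(2*(k:ℝ)+1)^3 := by
    intro k
    rw [hc]
    calc |π*(-1:ℝ)^k/(2*(k:ℝ)+1)^2 - 2/(2*(k:ℝ)+1)^3|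
        ≤ |π*(-1:ℝ)^k/(2*(k:ℝ)+1)^2| + |2/(2*(k:ℝ)+1)^3| := abs_sub _ _
      _ = π/(2*(k:ℝ)+1)^2 + 2/(2*(k:ℝ)+1)^3 := by
          rw [abs_div, abs_div, abs_mul, abs_pow, abs_neg, abs_one, one_pow, mul_one,
            abs_of_nonneg hpi.le, abs_of_nonneg (by positivity : (0:ℝ) ≤ (2*(k:ℝ)+1)^2),
            abs_of_nonneg (by norm_num : (0:ℝ) ≤ 2),
            abs_of_nonneg (by positivity : (0:ℝ) ≤ (2*(k:ℝ)+1)^3)]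
  apply tendsto_tsum_of_dominated_convergence
    (f := fun (x:ℝ) (k:ℕ) => (2*x^(2*k+1)) * c k) (g := fun k : ℕ => 2 * c k)
    (bound := fun k => 2*(π/(2*(k:ℝ)+1)^2 + 2/(2*(k:ℝ)+1)^3))
  · have h := (sq_summable.mul_left (2*π)).add (cube_summable.mul_left 4)
    apply h.congr
    intro k
    field_simp
    ring
  · intro k
    have hco : Continuous (fun x : ℝ => (2*x^(2*k+1)) * c k) := by fun_prop
    have h : Tendsto (fun x : ℝ => (2*x^(2*k+1)) * c k) (𝓝[<] (1:ℝ))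
        (𝓝 ((2*(1:ℝ)^(2*k+1)) * c k)) :=
      (hco.tendsto 1).mono_left nhdsWithin_le_nhds
    simpa using h
  · filter_upwards [Ioo_mem_nhdsLT_of_mem
      (show (1:ℝ) ∈ Set.Ioc 0 1 from ⟨one_pos, le_refl 1⟩)] with x hx k
    have hx0 : (0:ℝ) < x := hx.1
    have hx1 : x < 1 := hx.2
    rw [Real.norm_eq_abs, abs_mul, abs_of_nonneg (by positivity : (0:ℝ) ≤ 2*x^(2*k+1))]
    have hxp : x^(2*k+1) ≤ 1 := pow_le_one₀ hx0.le hx1.le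
    nlinarith [hcb k, abs_nonneg (c k)]


theorem stmt7 :
    ∫ t in (0:ℝ)..(π/2), t ^ 2 / Real.sin t
    = 2 * π * catalanG - 7/2 * zeta3 := by
  have hpi := Real.pi_pos
  have h0b : (0:ℝ) ≤ π/2 := by linarith
  have hmemI : Set.Ioo (1/2:ℝ) 1 ∈ 𝓝[<] (1:ℝ) :=
    Ioo_mem_nhdsLT_of_mem ⟨by norm_num, le_refl 1⟩
  have hA : Tendsto (fun x : ℝ => ∫ t in Set.Ioc (0:ℝ) (π/2), t^2 * gfun x t) (𝓝[<] (1:ℝ))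
      (𝓝 (∫ t in Set.Ioc (0:ℝ) (π/2), t^2 / Real.sin t)) := by
    apply tendsto_integral_filter_of_dominated_convergence (bound := fun _ => π^2)
    · filter_upwards [hmemI] with x hx
      have hx2 : x^2 < 1 := by nlinarith [hx.1, hx.2]
      have hgc : Continuous (fun t : ℝ => gfun x t) := by
        unfold gfun
        apply Continuous.div (by fun_prop) (by fun_prop)
        intro t
        exact (denom_pos t hx2).ne'
      exact ((continuous_pow 2).mul hgc).aestronglyMeasurable
    · filter_upwards [hmemI] with x hx
      rw [ae_restrict_iff' measurableSet_Ioc]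
      apply ae_of_all
      intro t ht
      rw [Real.norm_eq_abs]
      exact gfun_bound (by linarith [hx.1]) hx.2.le ht.1 ht.2
    · exact integrableOn_const measure_Ioc_lt_top.ne
    · rw [ae_restrict_iff' measurableSet_Ioc]
      apply ae_of_all
      intro t ht
      exact tendsto_gfun ht.1 ht.2
  have hB : Tendsto (fun x : ℝ => ∫ t in Set.Ioc (0:ℝ) (π/2), t^2 * gfun x t) (𝓝[<] (1:ℝ))
      (𝓝 (2*π*catalanG - 7/2*zeta3)) := by
    rw [← final_sum]
    apply tannery_lim.congr'
    filter_upwards [hmemI] with x hx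
    exact (interchange (by linarith [hx.1]) hx.2).symm
  rw [intervalIntegral.integral_of_le h0b, tendsto_nhds_unique hA hB]
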